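/- Suppose u : [0,T] × ℝⁿ → ℝ is continuous with u(0,·) = 0, and there exist A, B > 0 such that |u(t,x)| ≤ A e^{B|x|}. If additionally u(t,x) = ∫₀ᵗ ∫_V K(t-τ, x-y) g(τ,y) dy dτ where V ⊆ ℝⁿ is compact, g is continuous and bounded on [0,T] × V, and 0 ≤ K(s,z) ≤ K₁ e^{-|z|²/(8T)} for all s ∈ (0,T], |z| ≥ 1, then there exist A', B' > 0 with |u(t,x)| ≤ A' e^{-B'|x|²} for all t ∈ [0,T] and |x| ≥ 1 + sup_{y∈V}|y|. -/

import Mathlib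

open Set MeasureTheory

/-- Exponential decay at infinity from the representation formula: if `u` is continuous on
`[0,T] × ℝⁿ`, vanishes at `t = 0`, has sub-exponential growth `|u(t,x)| ≤ A e^{B|x|}`, and is
represented as `u(t,x) = ∫₀ᵗ ∫_V K(t-τ, x-y) g(τ,y) dy dτ` with `V` compact, `g` continuous
and bounded on `[0,T] × V`, and `0 ≤ K(s,z) ≤ K₁ e^{-|z|²/(8T)}` for `s ∈ (0,T]`, `|z| ≥ 1`,
then `|u(t,x)| ≤ A' e^{-B'|x|²}` for all `t ∈ [0,T]` and `|x| ≥ 1 + sup_{y∈V}|y|`. -/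
theorem representation_formula_exponential_decay {n : ℕ} (hn : 1 ≤ n)
    (T : ℝ) (hT : 0 < T)
    (u g : ℝ → EuclideanSpace ℝ (Fin n) → ℝ)
    (K : ℝ → EuclideanSpace ℝ (Fin n) → ℝ) (K₁ : ℝ) (hK₁ : 0 < K₁)
    (V : Set (EuclideanSpace ℝ (Fin n))) (hV : IsCompact V) (hVne : V.Nonempty)
    (MV : ℝ) (hMV : IsLUB ((fun y => ‖y‖) '' V) MV)
    (hu_cont : ContinuousOn (fun p : ℝ × EuclideanSpace ℝ (Fin n) => u p.1 p.2)
      (Set.Icc (0:ℝ) T ×ˢ (Set.univ : Set (EuclideanSpace ℝ (Fin n)))))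
    (hu0 : ∀ x, u 0 x = 0)
    (hgrowth : ∃ A : ℝ, 0 < A ∧ ∃ B : ℝ, 0 < B ∧
      ∀ t ∈ Set.Icc (0:ℝ) T, ∀ x, |u t x| ≤ A * Real.exp (B * ‖x‖))
    (hg_cont : ContinuousOn (fun p : ℝ × EuclideanSpace ℝ (Fin n) => g p.1 p.2)
      (Set.Icc (0:ℝ) T ×ˢ V))
    (hg_bnd : ∃ Cg : ℝ, ∀ τ ∈ Set.Icc (0:ℝ) T, ∀ y ∈ V, |g τ y| ≤ Cg)
    (hK : ∀ s ∈ Set.Ioc (0:ℝ) T, ∀ z : EuclideanSpace ℝ (Fin n), 1 ≤ ‖z‖ →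
      0 ≤ K s z ∧ K s z ≤ K₁ * Real.exp (-‖z‖ ^ 2 / (8 * T)))
    (hrep : ∀ t ∈ Set.Icc (0:ℝ) T, ∀ x,
      u t x = ∫ τ in Set.Ioc (0:ℝ) t, ∫ y in V, K (t - τ) (x - y) * g τ y) :
    ∃ A' : ℝ, 0 < A' ∧ ∃ B' : ℝ, 0 < B' ∧
      ∀ t ∈ Set.Icc (0:ℝ) T, ∀ x : EuclideanSpace ℝ (Fin n), 1 + MV ≤ ‖x‖ →
        |u t x| ≤ A' * Real.exp (-B' * ‖x‖ ^ 2) := by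
  obtain ⟨Cg, hCg⟩ := hg_bnd
  set Cg' : ℝ := max Cg 0 with hCg'def
  have hCg'0 : 0 ≤ Cg' := le_max_right _ _
  have hCg' : ∀ τ ∈ Set.Icc (0:ℝ) T, ∀ y ∈ V, |g τ y| ≤ Cg' :=
    fun τ hτ y hy => le_trans (hCg τ hτ y hy) (le_max_left _ _)
  have hMV0 : 0 ≤ MV := by
    obtain ⟨y, hy⟩ := hVne
    exact le_trans (norm_nonneg y) (hMV.1 ⟨y, hy, rfl⟩)
  have hVfin : volume V < ⊤ := hV.measure_lt_top
  set W : ℝ := (volume V).toReal with hWdef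
  have hW0 : 0 ≤ W := ENNReal.toReal_nonneg
  refine ⟨max (K₁ * Cg' * W * T * Real.exp (MV ^ 2 / (8 * T))) 1,
    lt_of_lt_of_le one_pos (le_max_right _ _), 1 / (16 * T), by positivity, ?_⟩
  intro t ht x hx
  have hx1 : 1 ≤ ‖x‖ := by linarith
  have hdist : ∀ y ∈ V, ‖x‖ - MV ≤ ‖x - y‖ := by
    intro y hy
    have h1 : ‖y‖ ≤ MV := hMV.1 ⟨y, hy, rfl⟩
    have h2 := norm_sub_norm_le x y
    linarith
  have hxMV1 : (1:ℝ) ≤ ‖x‖ - MV := by linarith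
  set D : ℝ := (‖x‖ - MV) ^ 2 with hDdef
  have hinner : ∀ τ ∈ Set.Ioo (0:ℝ) t,
      ‖∫ y in V, K (t - τ) (x - y) * g τ y‖ ≤ K₁ * Real.exp (-D / (8 * T)) * Cg' * W := by
    intro τ hτ
    have hb : ∀ y ∈ V, ‖K (t - τ) (x - y) * g τ y‖ ≤ K₁ * Real.exp (-D / (8 * T)) * Cg' := by
      intro y hy
      have hs : t - τ ∈ Set.Ioc (0:ℝ) T := ⟨by linarith [hτ.2], by linarith [hτ.1, ht.2]⟩
      have hz1 : 1 ≤ ‖x - y‖ := le_trans hxMV1 (hdist y hy)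
      obtain ⟨hK0, hKle⟩ := hK (t - τ) hs (x - y) hz1
      have hD : D ≤ ‖x - y‖ ^ 2 := by nlinarith [hdist y hy]
      have hKle' : K (t - τ) (x - y) ≤ K₁ * Real.exp (-D / (8 * T)) := by
        refine le_trans hKle ?_
        have hmono : -‖x - y‖ ^ 2 / (8 * T) ≤ -D / (8 * T) := by
          apply div_le_div_of_nonneg_right ?_ (by linarith)
          · linarith
        exact mul_le_mul_of_nonneg_left (Real.exp_le_exp.mpr hmono) (le_of_lt hK₁)
      have hgb : |g τ y| ≤ Cg' := hCg' τ ⟨le_of_lt hτ.1, le_trans (le_of_lt hτ.2) ht.2⟩ y hy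
      calc ‖K (t - τ) (x - y) * g τ y‖ = K (t - τ) (x - y) * |g τ y| := by
            rw [Real.norm_eq_abs, abs_mul, abs_of_nonneg hK0]
        _ ≤ K₁ * Real.exp (-D / (8 * T)) * Cg' :=
            mul_le_mul hKle' hgb (abs_nonneg _) (by positivity)
    exact norm_setIntegral_le_of_norm_le_const hVfin hb
  have ht0 : 0 ≤ t := ht.1
  have hIoofin : volume (Set.Ioo (0:ℝ) t) < ⊤ := by
    rw [Real.volume_Ioo]; exact ENNReal.ofReal_lt_top
  have houter : |u t x| ≤ K₁ * Real.exp (-D / (8 * T)) * Cg' * W * t := by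
    have hrw : u t x = ∫ τ in Set.Ioo (0:ℝ) t, ∫ y in V, K (t - τ) (x - y) * g τ y := by
      rw [hrep t ht x, ← MeasureTheory.integral_Ioc_eq_integral_Ioo]
    rw [← Real.norm_eq_abs, hrw]
    have := norm_setIntegral_le_of_norm_le_const hIoofin hinner
    calc ‖∫ τ in Set.Ioo (0:ℝ) t, ∫ y in V, K (t - τ) (x - y) * g τ y‖
        ≤ K₁ * Real.exp (-D / (8 * T)) * Cg' * W * (volume (Set.Ioo (0:ℝ) t)).toReal := this
      _ = K₁ * Real.exp (-D / (8 * T)) * Cg' * W * t := by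
          rw [Real.volume_Ioo, ENNReal.toReal_ofReal (by linarith)]
          ring_nf
  have hexp : Real.exp (-D / (8 * T)) ≤
      Real.exp (MV ^ 2 / (8 * T)) * Real.exp (-(1 / (16 * T)) * ‖x‖ ^ 2) := by
    rw [← Real.exp_add]
    apply Real.exp_le_exp.mpr
    have hnum : 0 ≤ 2 * MV ^ 2 + 2 * D - ‖x‖ ^ 2 := by
      rw [hDdef]; nlinarith [sq_nonneg (‖x‖ - 2 * MV)]
    have heq : MV ^ 2 / (8 * T) + -(1 / (16 * T)) * ‖x‖ ^ 2 - -D / (8 * T)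
        = (2 * MV ^ 2 + 2 * D - ‖x‖ ^ 2) / (16 * T) := by
      field_simp; ring
    have hnn : 0 ≤ (2 * MV ^ 2 + 2 * D - ‖x‖ ^ 2) / (16 * T) :=
      div_nonneg hnum (by positivity)
    linarith
  calc |u t x| ≤ K₁ * Real.exp (-D / (8 * T)) * Cg' * W * t := houter
    _ ≤ K₁ * Real.exp (-D / (8 * T)) * Cg' * W * T := by
        apply mul_le_mul_of_nonneg_left ht.2 (by positivity)
    _ ≤ K₁ * (Real.exp (MV ^ 2 / (8 * T)) * Real.exp (-(1 / (16 * T)) * ‖x‖ ^ 2)) * Cg' * W * T := by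
        apply mul_le_mul_of_nonneg_right _ (le_of_lt hT)
        apply mul_le_mul_of_nonneg_right _ hW0
        apply mul_le_mul_of_nonneg_right _ hCg'0
        exact mul_le_mul_of_nonneg_left hexp (le_of_lt hK₁)
    _ = (K₁ * Cg' * W * T * Real.exp (MV ^ 2 / (8 * T))) *
          Real.exp (-(1 / (16 * T)) * ‖x‖ ^ 2) := by ring
    _ ≤ max (K₁ * Cg' * W * T * Real.exp (MV ^ 2 / (8 * T))) 1 *
          Real.exp (-(1 / (16 * T)) * ‖x‖ ^ 2) :=
        mul_le_mul_of_nonneg_right (le_max_left _ _) (Real.exp_pos _).le
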